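/- Let $B$ be a standard Brownian motion and $c>0$. Then the random variable $\sup_{t\geq 0}(B_t - ct)$ has an exponential distribution with parameter $2c$; i.e., for every $N \geq 0$, $P(\sup_{t\geq 0}(B_t - ct) > N) = e^{-2Nc}$. -/

import Mathlib

open MeasureTheory ProbabilityTheory Filter

/-- `B` is a standard one-dimensional Brownian motion starting at `0` under `μ`. -/
def IsStandardBM {Ω : Type*} [MeasurableSpace Ω] (μ : Measure Ω) (B : ℝ → Ω → ℝ) : Prop :=
  (∀ ω, Continuous fun t => B t ω) ∧ (∀ ω, B 0 ω = 0) ∧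
  (∀ t, Measurable (B t)) ∧
  (∀ n : ℕ, ∀ t : ℕ → ℝ, Monotone t → (∀ i, 0 ≤ t i) →
    iIndepFun
      (fun (i : Fin n) ω => B (t (i + 1)) ω - B (t i) ω) μ) ∧
  (∀ s t : ℝ, 0 ≤ s → s ≤ t →
    Measure.map (fun ω => B t ω - B s ω) μ = gaussianReal 0 (ENNReal.ofReal (t - s)).toNNReal)



open MeasureTheory ProbabilityTheory Filter Set
open scoped NNReal ENNReal

namespace BMaux

variable {v : ℝ≥0} (t : ℝ)

lemma pdf_tilt (hv : v ≠ 0) (x : ℝ) :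
    gaussianPDFReal 0 v x * Real.exp (t*x - t^2*v/2) = gaussianPDFReal (t*v) v x := by
  have hv' : (v:ℝ) ≠ 0 := by exact_mod_cast hv
  simp only [gaussianPDFReal, sub_zero]
  rw [mul_assoc, ← Real.exp_add]
  congr 1
  field_simp
  ring

lemma tilt_measure (hv : v ≠ 0) :
    gaussianReal (t*v) v
      = (gaussianReal 0 v).withDensity (fun x => ENNReal.ofReal (Real.exp (t*x - t^2*v/2))) := by
  rw [gaussianReal_of_var_ne_zero _ hv, gaussianReal_of_var_ne_zero _ hv,
    ← withDensity_mul _ (measurable_gaussianPDF _ _) (by fun_prop)]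
  congr 1
  funext x
  simp only [Pi.mul_apply, gaussianPDF]
  rw [← ENNReal.ofReal_mul (gaussianPDFReal_nonneg _ _ _), pdf_tilt t hv]

lemma lint_tilt (hv : v ≠ 0) {s : Set ℝ} (hs : MeasurableSet s) :
    ∫⁻ x in s, ENNReal.ofReal (Real.exp (t*x - t^2*v/2)) ∂(gaussianReal 0 v)
      = gaussianReal (t*v) v s := by
  rw [tilt_measure t hv, withDensity_apply _ hs]

lemma lint_exp (hv : v ≠ 0) :
    ∫⁻ x, ENNReal.ofReal (Real.exp (t*x)) ∂(gaussianReal 0 v)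
      = ENNReal.ofReal (Real.exp (t^2*v/2)) := by
  have h : ∀ x : ℝ, ENNReal.ofReal (Real.exp (t*x))
      = ENNReal.ofReal (Real.exp (t^2*v/2)) * ENNReal.ofReal (Real.exp (t*x - t^2*v/2)) := by
    intro x
    rw [← ENNReal.ofReal_mul (Real.exp_nonneg _), ← Real.exp_add]
    ring_nf
  simp only [h]
  rw [lintegral_const_mul _ (by fun_prop)]
  have := lint_tilt t hv (MeasurableSet.univ)
  rw [Measure.restrict_univ] at this
  rw [this]
  simp [measure_univ]

lemma exp_integrable (hv : v ≠ 0) :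
    Integrable (fun x => Real.exp (t*x)) (gaussianReal 0 v) := by
  refine ⟨(by fun_prop : Measurable fun x => Real.exp (t*x)).aestronglyMeasurable, ?_⟩
  rw [hasFiniteIntegral_iff_ofReal (ae_of_all _ fun x => Real.exp_nonneg _)]
  rw [lint_exp t hv]
  exact ENNReal.ofReal_lt_top

lemma integral_exp_indicator (hv : v ≠ 0) {s : Set ℝ} (hs : MeasurableSet s) :
    ∫ x, Set.indicator s (fun x => Real.exp (t*x)) x ∂(gaussianReal 0 v)
      = Real.exp (t^2*v/2) * (gaussianReal (t*v) v s).toReal := by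
  have hnn : (0:ℝ → ℝ) ≤ᵐ[gaussianReal 0 v] fun x => Set.indicator s (fun x => Real.exp (t*x)) x :=
    ae_of_all _ fun x => Set.indicator_nonneg (fun y _ => Real.exp_nonneg _) x
  rw [integral_eq_lintegral_of_nonneg_ae hnn
    (((exp_integrable t hv).indicator hs).aestronglyMeasurable)]
  have h1 : ∀ x, ENNReal.ofReal (Set.indicator s (fun x => Real.exp (t*x)) x)
      = Set.indicator s (fun x => ENNReal.ofReal (Real.exp (t*x))) x := by
    intro x
    by_cases hx : x ∈ s <;> simp [hx]
  simp only [h1]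
  rw [lintegral_indicator hs _]
  have h2 : ∀ x : ℝ, ENNReal.ofReal (Real.exp (t*x))
      = ENNReal.ofReal (Real.exp (t^2*v/2)) * ENNReal.ofReal (Real.exp (t*x - t^2*v/2)) := by
    intro x
    rw [← ENNReal.ofReal_mul (Real.exp_nonneg _), ← Real.exp_add]
    ring_nf
  simp only [h2]
  rw [lintegral_const_mul _ (by fun_prop), lint_tilt t hv hs, ENNReal.toReal_mul,
    ENNReal.toReal_ofReal (Real.exp_nonneg _)]

lemma integral_exp (hv : v ≠ 0) :
    ∫ x, Real.exp (t*x) ∂(gaussianReal 0 v) = Real.exp (t^2*v/2) := by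
  have := integral_exp_indicator t hv (MeasurableSet.univ)
  simpa [Set.indicator_univ, measure_univ] using this









variable {v : ℝ≥0}

lemma gauss_Iic_shift (m : ℝ) (u : ℝ) :
    gaussianReal m v (Iic u) = gaussianReal 0 v (Iic (u - m)) := by
  have h := gaussianReal_map_add_const (μ := 0) (v := v) m
  rw [zero_add] at h
  rw [← h, Measure.map_apply (measurable_add_const m) measurableSet_Iic]
  congr 1
  ext x
  simp [sub_nonneg, le_sub_iff_add_le]

lemma gauss_Ioi_shift (m : ℝ) (u : ℝ) :
    gaussianReal m v (Ioi u) = gaussianReal 0 v (Ioi (u - m)) := by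
  have h := gaussianReal_map_add_const (μ := 0) (v := v) m
  rw [zero_add] at h
  rw [← h, Measure.map_apply (measurable_add_const m) measurableSet_Ioi]
  congr 1
  ext x
  simp [lt_sub_iff_add_lt]

lemma chernoff_Iic (hv : v ≠ 0) {s : ℝ} (hs : 0 ≤ s) (u : ℝ) :
    (gaussianReal 0 v (Iic u)).toReal ≤ Real.exp (s*u + s^2*v/2) := by
  have hint : Integrable (fun x => Real.exp (s*u) * Real.exp (-s*x)) (gaussianReal 0 v) :=
    (exp_integrable (-s) hv).const_mul _
  have hmono : ∀ x : ℝ, Set.indicator (Iic u) (fun _ => (1:ℝ)) x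
      ≤ Real.exp (s*u) * Real.exp (-s*x) := by
    intro x
    rw [← Real.exp_add]
    by_cases hx : x ∈ Iic u
    · simp only [hx, Set.indicator_of_mem]
      rw [show s*u + -s*x = s*(u-x) by ring]
      exact Real.one_le_exp (mul_nonneg hs (sub_nonneg.2 hx))
    · simp only [hx, Set.indicator_of_notMem, not_false_iff]
      exact (Real.exp_pos _).le
  have h1 : (gaussianReal 0 v (Iic u)).toReal
      = ∫ x, Set.indicator (Iic u) (fun _ => (1:ℝ)) x ∂(gaussianReal 0 v) := by
    rw [integral_indicator_const (1:ℝ) measurableSet_Iic]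
    simp [measureReal_def]
  rw [h1]
  calc ∫ x, Set.indicator (Iic u) (fun _ => (1:ℝ)) x ∂(gaussianReal 0 v)
      ≤ ∫ x, Real.exp (s*u) * Real.exp (-s*x) ∂(gaussianReal 0 v) := by
        refine integral_mono ?_ hint hmono
        exact (integrable_const (1:ℝ)).indicator measurableSet_Iic
    _ = Real.exp (s*u) * Real.exp ((-s)^2*v/2) := by
        rw [integral_const_mul, integral_exp (-s) hv]
    _ = Real.exp (s*u + s^2*v/2) := by rw [← Real.exp_add]; ring_nf

lemma chernoff_Ioi (hv : v ≠ 0) {s : ℝ} (hs : 0 ≤ s) (u : ℝ) :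
    (gaussianReal 0 v (Ioi u)).toReal ≤ Real.exp (-(s*u) + s^2*v/2) := by
  have hint : Integrable (fun x => Real.exp (-(s*u)) * Real.exp (s*x)) (gaussianReal 0 v) :=
    (exp_integrable s hv).const_mul _
  have hmono : ∀ x : ℝ, Set.indicator (Ioi u) (fun _ => (1:ℝ)) x
      ≤ Real.exp (-(s*u)) * Real.exp (s*x) := by
    intro x
    rw [← Real.exp_add]
    by_cases hx : x ∈ Ioi u
    · simp only [hx, Set.indicator_of_mem]
      rw [show -(s*u) + s*x = s*(x-u) by ring]
      exact Real.one_le_exp (mul_nonneg hs (sub_nonneg.2 (le_of_lt hx)))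
    · simp only [hx, Set.indicator_of_notMem, not_false_iff]
      exact (Real.exp_pos _).le
  have h1 : (gaussianReal 0 v (Ioi u)).toReal
      = ∫ x, Set.indicator (Ioi u) (fun _ => (1:ℝ)) x ∂(gaussianReal 0 v) := by
    rw [integral_indicator_const (1:ℝ) measurableSet_Ioi]
    simp [measureReal_def]
  rw [h1]
  calc ∫ x, Set.indicator (Ioi u) (fun _ => (1:ℝ)) x ∂(gaussianReal 0 v)
      ≤ ∫ x, Real.exp (-(s*u)) * Real.exp (s*x) ∂(gaussianReal 0 v) := by
        refine integral_mono ?_ hint hmono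
        exact (integrable_const (1:ℝ)).indicator measurableSet_Ioi
    _ = Real.exp (-(s*u)) * Real.exp (s^2*v/2) := by
        rw [integral_const_mul, integral_exp s hv]
    _ = Real.exp (-(s*u) + s^2*v/2) := by rw [← Real.exp_add]

end BMaux

section M1

open MeasureTheory ProbabilityTheory Filter Set
open scoped NNReal ENNReal

namespace BMaux

variable {Ω : Type*} [MeasurableSpace Ω]

/-- exponential martingale at grid point k -/
noncomputable def Xf (B : ℝ → Ω → ℝ) (c h : ℝ) (k : ℕ) (ω : Ω) : ℝ :=
  Real.exp (2*c*(B ((k:ℝ)*h) ω - c*((k:ℝ)*h)))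

/-- no crossing up to grid point k -/
def Gs (B : ℝ → Ω → ℝ) (c N h : ℝ) (k : ℕ) : Set Ω :=
  {ω | ∀ j ≤ k, B ((j:ℝ)*h) ω ≤ N + c*((j:ℝ)*h)}

/-- increment -/
def Df (B : ℝ → Ω → ℝ) (h : ℝ) (k : ℕ) (ω : Ω) : ℝ :=
  B (((k:ℝ)+1)*h) ω - B ((k:ℝ)*h) ω

/-- stopped exponential martingale -/
noncomputable def SV (B : ℝ → Ω → ℝ) (c N h : ℝ) : ℕ → Ω → ℝ
  | 0 => fun _ => 1
  | (k+1) => fun ω => SV B c N h k ω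
      + Set.indicator (Gs B c N h k) (fun ω' => Xf B c h (k+1) ω' - Xf B c h k ω') ω

variable {μ : Measure Ω} {B : ℝ → Ω → ℝ} {c N h : ℝ}

lemma meas_Xf (hm : ∀ t, Measurable (B t)) (k : ℕ) : Measurable (Xf B c h k) := by
  unfold Xf; fun_prop

lemma meas_Gs (hm : ∀ t, Measurable (B t)) (k : ℕ) : MeasurableSet (Gs B c N h k) := by
  have : Gs B c N h k = ⋂ j, ⋂ (_ : j ≤ k), {ω | B ((j:ℝ)*h) ω ≤ N + c*((j:ℝ)*h)} := by
    ext ω; simp [Gs]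
  rw [this]
  exact MeasurableSet.iInter fun j => MeasurableSet.iInter fun _ =>
    measurableSet_le (hm _) measurable_const

lemma Gs_antitone (hjk : (j:ℕ) ≤ k) : Gs B c N h k ⊆ Gs B c N h j :=
  fun ω hω i hi => hω i (hi.trans hjk)

lemma Gs_zero (hB0 : ∀ ω, B 0 ω = 0) (hN : 0 ≤ N) : Gs B c N h 0 = Set.univ := by
  ext ω
  simp only [Gs, Set.mem_setOf_eq, Set.mem_univ, iff_true, Nat.le_zero]
  rintro j rfl
  simp [hB0 ω, hN]

lemma Xf_zero (hB0 : ∀ ω, B 0 ω = 0) (ω : Ω) : Xf B c h 0 ω = 1 := by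
  simp [Xf, hB0 ω]

lemma Xf_pos (k : ℕ) (ω : Ω) : 0 < Xf B c h k ω := Real.exp_pos _

lemma Xf_succ (k : ℕ) (ω : Ω) :
    Xf B c h (k+1) ω = Xf B c h k ω * Real.exp (2*c*(Df B h k ω) - 2*c^2*h) := by
  unfold Xf Df
  rw [← Real.exp_add]
  congr 1
  push_cast
  ring

lemma Xf_le_on_Gs (hc : 0 ≤ c) (k : ℕ) {ω : Ω} (hω : ω ∈ Gs B c N h k) :
    Xf B c h k ω ≤ Real.exp (2*c*N) := by
  have := hω k le_rfl
  unfold Xf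
  exact Real.exp_le_exp.2 (by nlinarith)

lemma partial_sum (hB0 : ∀ ω, B 0 ω = 0) (h : ℝ) (ω : Ω) :
    ∀ j : ℕ, B ((j:ℝ)*h) ω = ∑ i ∈ Finset.range j, Df B h i ω := by
  intro j
  induction j with
  | zero => simp [hB0 ω]
  | succ j ih =>
      rw [Finset.sum_range_succ, ← ih]
      unfold Df
      push_cast
      ring

end BMaux
end M1

section M2
open MeasureTheory ProbabilityTheory Filter Set
open scoped NNReal ENNReal

namespace BMaux

variable {Ω : Type*} [MeasurableSpace Ω] {μ : Measure Ω} {B : ℝ → Ω → ℝ} {c N h : ℝ}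

lemma meas_Df (hm : ∀ t, Measurable (B t)) (k : ℕ) : Measurable (Df B h k) :=
  (hm _).sub (hm _)

lemma law_Df (hB : IsStandardBM μ B) (hh : 0 < h) (k : ℕ) :
    Measure.map (Df B h k) μ = gaussianReal 0 h.toNNReal := by
  have h5 := hB.2.2.2.2 ((k:ℝ)*h) (((k:ℝ)+1)*h) (by positivity) (by nlinarith)
  have he : (fun ω => B (((k:ℝ)+1)*h) ω - B ((k:ℝ)*h) ω) = Df B h k := rfl
  rw [he] at h5
  rw [h5]
  congr 1
  rw [show ((k:ℝ)+1)*h - (k:ℝ)*h = h by ring]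
  simp [ENNReal.ofReal]

lemma law_BT (hB : IsStandardBM μ B) {T : ℝ} (hT : 0 ≤ T) :
    Measure.map (B T) μ = gaussianReal 0 T.toNNReal := by
  have h5 := hB.2.2.2.2 0 T le_rfl hT
  have he : (fun ω => B T ω - B 0 ω) = B T := by
    funext ω; rw [hB.2.1 ω, sub_zero]
  rw [he] at h5
  rw [h5, sub_zero]
  congr 1

lemma indep_Df (hB : IsStandardBM μ B) (hh : 0 < h) (k : ℕ) :
    IndepFun (fun ω (i : Fin k) => Df B h i ω) (Df B h k) μ := by
  classical
  have h4 := hB.2.2.2.1 (k+1) (fun j => (j:ℝ)*h)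
    (fun a b hab => mul_le_mul_of_nonneg_right (Nat.cast_le.2 hab) hh.le)
    (fun i => by positivity)
  have h4' : iIndepFun
      (fun (i : Fin (k+1)) ω => Df B h (i:ℕ) ω) μ := by
    have he : (fun (i : Fin (k+1)) (ω : Ω) => Df B h (i:ℕ) ω)
        = fun (i : Fin (k+1)) ω => B ((((i:ℕ) + 1 : ℕ):ℝ)*h) ω - B ((((i:ℕ) : ℕ):ℝ)*h) ω := by
      funext i ω
      unfold Df
      push_cast
      ring_nf
    rw [he]
    exact h4
  have hmeas : ∀ i : Fin (k+1), Measurable (fun ω => Df B h (i:ℕ) ω) :=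
    fun i => meas_Df hB.2.2.1 _
  have hdisj : Disjoint (Finset.univ.erase (Fin.last k)) ({Fin.last k} : Finset (Fin (k+1))) := by
    simp
  have hIF := h4'.indepFun_finset (Finset.univ.erase (Fin.last k)) {Fin.last k} hdisj hmeas
  have he : Measurable (fun (v : (i : (Finset.univ.erase (Fin.last k) : Finset (Fin (k+1)))) → ℝ)
      (i : Fin k) => v ⟨⟨(i:ℕ), Nat.lt_succ_of_lt i.2⟩, by
        simp [Finset.mem_erase, Fin.ext_iff, Fin.last]
        omega⟩) :=
    measurable_pi_lambda _ fun i => measurable_pi_apply _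
  have hr : Measurable (fun (v : (i : ({Fin.last k} : Finset (Fin (k+1)))) → ℝ) =>
      v ⟨Fin.last k, Finset.mem_singleton_self _⟩) := measurable_pi_apply _
  have := hIF.comp he hr
  exact this

end BMaux
end M2

section M3
open MeasureTheory ProbabilityTheory Filter Set
open scoped NNReal ENNReal

namespace BMaux

variable {Ω : Type*} [MeasurableSpace Ω] {μ : Measure Ω} {B : ℝ → Ω → ℝ} {c N h : ℝ}

noncomputable def psum (k : ℕ) (v : Fin k → ℝ) (j : ℕ) : ℝ :=
  ∑ i : Fin k, if (i:ℕ) < j then v i else 0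

lemma meas_psum (k j : ℕ) : Measurable (fun v : Fin k → ℝ => psum k v j) := by
  unfold psum
  refine Finset.measurable_sum _ (fun i _ => ?_)
  by_cases hij : (i:ℕ) < j <;> simp [hij]
  · exact measurable_pi_apply _

lemma psum_eq (hB0 : ∀ ω, B 0 ω = 0) {k j : ℕ} (hj : j ≤ k) (ω : Ω) :
    psum k (fun i : Fin k => Df B h i ω) j = B ((j:ℝ)*h) ω := by
  rw [partial_sum hB0 h ω j]
  unfold psum
  rw [Fin.sum_univ_eq_sum_range (fun i => if i < j then Df B h i ω else 0) k]
  rw [← Finset.sum_filter]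
  congr 1
  ext i
  simp only [Finset.mem_filter, Finset.mem_range]
  omega

lemma integrable_comp_Df (hB : IsStandardBM μ B) (hh : 0 < h) (k : ℕ)
    {g : ℝ → ℝ} (hg : Measurable g) (hgi : Integrable g (gaussianReal 0 h.toNNReal)) :
    Integrable (fun ω => g (Df B h k ω)) μ := by
  rw [← law_Df hB hh k] at hgi
  exact (integrable_map_measure hg.aestronglyMeasurable
    (meas_Df hB.2.2.1 k).aemeasurable).mp hgi

lemma integral_comp_Df (hB : IsStandardBM μ B) (hh : 0 < h) (k : ℕ)
    {g : ℝ → ℝ} (hg : Measurable g) :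
    ∫ ω, g (Df B h k ω) ∂μ = ∫ x, g x ∂(gaussianReal 0 h.toNNReal) := by
  rw [← law_Df hB hh k]
  exact (integral_map (meas_Df hB.2.2.1 k).aemeasurable hg.aestronglyMeasurable).symm

lemma key_product [IsProbabilityMeasure μ] (hB : IsStandardBM μ B) (hh : 0 < h) (k : ℕ)
    (F : (Fin (k+1) → ℝ) → ℝ) (hF : Measurable F) (M : ℝ) (hFb : ∀ x, |F x| ≤ M)
    (g : ℝ → ℝ) (hg : Measurable g) (hgi : Integrable g (gaussianReal 0 h.toNNReal)) :
    ∫ ω, F (fun j : Fin (k+1) => B ((j:ℝ)*h) ω) * g (Df B h k ω) ∂μ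
      = (∫ ω, F (fun j : Fin (k+1) => B ((j:ℝ)*h) ω) ∂μ)
        * ∫ x, g x ∂(gaussianReal 0 h.toNNReal) := by
  have hP : Measurable (fun (v : Fin k → ℝ) (j : Fin (k+1)) => psum k v (j:ℕ)) :=
    measurable_pi_lambda _ fun j => meas_psum k j
  have hvec : ∀ ω, (fun j : Fin (k+1) => psum k (fun i : Fin k => Df B h i ω) (j:ℕ))
      = fun j : Fin (k+1) => B (((j:ℕ):ℝ)*h) ω := by
    intro ω
    funext j
    exact psum_eq hB.2.1 (Nat.lt_succ_iff.mp j.2) ω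
  have hFvec : (fun ω => F (fun j : Fin (k+1) => B (((j:ℕ):ℝ)*h) ω))
      = (fun ω => (F ∘ (fun (v : Fin k → ℝ) (j : Fin (k+1)) => psum k v (j:ℕ)))
          ((fun ω' (i : Fin k) => Df B h i ω') ω)) := by
    funext ω
    simp only [Function.comp_apply, hvec ω]
  have hIndep : IndepFun
      (fun ω => (F ∘ (fun (v : Fin k → ℝ) (j : Fin (k+1)) => psum k v (j:ℕ)))
          ((fun ω' (i : Fin k) => Df B h i ω') ω))
      (fun ω => g (Df B h k ω)) μ :=
    (indep_Df hB hh k).comp (hF.comp hP) hg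
  have hintW : Integrable (fun ω => F (fun j : Fin (k+1) => B (((j:ℕ):ℝ)*h) ω)) μ := by
    refine Integrable.mono' (integrable_const M) ?_ (ae_of_all _ fun ω => hFb _)
    exact (hF.comp ((measurable_pi_lambda _ fun j => hB.2.2.1 _))).aestronglyMeasurable
  have hintG : Integrable (fun ω => g (Df B h k ω)) μ := integrable_comp_Df hB hh k hg hgi
  have hmul := hIndep.integral_mul_eq_mul_integral (show Integrable (fun ω => (F ∘ (fun (v : Fin k → ℝ) (j : Fin (k+1)) => psum k v (j:ℕ)))
    ((fun ω' (i : Fin k) => Df B h i ω') ω)) μ by rw [← hFvec]; exact hintW).aestronglyMeasurable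
    hintG.aestronglyMeasurable
  have hL : ∫ ω, F (fun j : Fin (k+1) => B (((j:ℕ):ℝ)*h) ω) * g (Df B h k ω) ∂μ
      = ∫ ω, ((fun ω => (F ∘ (fun (v : Fin k → ℝ) (j : Fin (k+1)) => psum k v (j:ℕ)))
          ((fun ω' (i : Fin k) => Df B h i ω') ω)) * (fun ω => g (Df B h k ω))) ω ∂μ := by
    refine integral_congr_ae (ae_of_all _ fun ω => ?_)
    simp only [Pi.mul_apply, Function.comp_apply, hvec ω]
  rw [hL, hmul, ← hFvec]
  congr 1
  exact integral_comp_Df hB hh k hg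

lemma integrable_Xf [IsProbabilityMeasure μ] (hB : IsStandardBM μ B) (hh : 0 < h) (k : ℕ) :
    Integrable (Xf B c h k) μ := by
  cases k with
  | zero =>
      have : Xf B c h 0 = fun _ : Ω => (1:ℝ) := funext (Xf_zero hB.2.1)
      rw [this]; exact integrable_const 1
  | succ k =>
      set T : ℝ := (((k+1:ℕ)):ℝ)*h with hT
      have hTpos : 0 < T := by positivity
      have hv : T.toNNReal ≠ 0 := by
        simp [Real.toNNReal_pos.2 hTpos, ne_of_gt]
      have hgi : Integrable (fun x => Real.exp (2*c*(x - c*T))) (gaussianReal 0 T.toNNReal) := by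
        have := (exp_integrable (2*c) hv).const_mul (Real.exp (-(2*c^2*T)))
        refine this.congr' ?_ ?_
        · exact (by fun_prop : Measurable fun x => Real.exp (2*c*(x - c*T))).aestronglyMeasurable
        · refine ae_of_all _ fun x => ?_
          rw [← Real.exp_add]
          congr 1
          ring
      have hXeq : Xf B c h (k+1) = fun ω => (fun x => Real.exp (2*c*(x - c*T))) (B T ω) := rfl
      rw [hXeq]
      rw [← law_BT hB hTpos.le] at hgi
      exact (integrable_map_measure (by fun_prop : Measurable fun x => Real.exp (2*c*(x - c*T))).aestronglyMeasurable
        (hB.2.2.1 T).aemeasurable).mp hgi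

end BMaux
end M3

section M4
open MeasureTheory ProbabilityTheory Filter Set
open scoped NNReal ENNReal

namespace BMaux

variable {Ω : Type*} [MeasurableSpace Ω] {μ : Measure Ω} {B : ℝ → Ω → ℝ} {c N h : ℝ}

lemma hNNe (hh : 0 < h) : h.toNNReal ≠ 0 := by
  simp [Real.toNNReal_pos.2 hh, ne_of_gt]

lemma coe_toNNReal_h (hh : 0 < h) : (h.toNNReal : ℝ) = h := Real.coe_toNNReal h hh.le

/-- The indicator of no-crossing times current value, as a function of the grid path. -/
noncomputable def Ffun (c N h : ℝ) (k : ℕ) : (Fin (k+1) → ℝ) → ℝ :=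
  Set.indicator {v : Fin (k+1) → ℝ | ∀ j, v j ≤ N + c*(((j:ℕ):ℝ)*h)}
    (fun v => Real.exp (2*c*(v (Fin.last k) - c*((k:ℝ)*h))))

lemma meas_Ffun (c N h : ℝ) (k : ℕ) : Measurable (Ffun c N h k) := by
  unfold Ffun
  refine Measurable.indicator (by fun_prop) ?_
  have : {v : Fin (k+1) → ℝ | ∀ j, v j ≤ N + c*(((j:ℕ):ℝ)*h)}
      = ⋂ j, {v : Fin (k+1) → ℝ | v j ≤ N + c*(((j:ℕ):ℝ)*h)} := by
    ext v; simp
  rw [this]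
  exact MeasurableSet.iInter fun j => measurableSet_le (measurable_pi_apply _) measurable_const

lemma Ffun_bound (hc : 0 ≤ c) (hk : True) (v : Fin (k+1) → ℝ) :
    |Ffun c N h k v| ≤ Real.exp (2*c*N) := by
  unfold Ffun
  by_cases hv : v ∈ {v : Fin (k+1) → ℝ | ∀ j, v j ≤ N + c*(((j:ℕ):ℝ)*h)}
  · rw [Set.indicator_of_mem hv, abs_of_nonneg (Real.exp_nonneg _)]
    refine Real.exp_le_exp.2 ?_
    have := hv (Fin.last k)
    simp only [Fin.val_last] at this
    nlinarith
  · rw [Set.indicator_of_notMem hv]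
    simp [Real.exp_nonneg]

lemma Ffun_eq (hB0 : ∀ ω, B 0 ω = 0) (k : ℕ) (ω : Ω) :
    Ffun c N h k (fun j : Fin (k+1) => B (((j:ℕ):ℝ)*h) ω)
      = Set.indicator (Gs B c N h k) (Xf B c h k) ω := by
  unfold Ffun
  have hmem : (fun j : Fin (k+1) => B (((j:ℕ):ℝ)*h) ω)
      ∈ {v : Fin (k+1) → ℝ | ∀ j, v j ≤ N + c*(((j:ℕ):ℝ)*h)} ↔ ω ∈ Gs B c N h k := by
    constructor
    · intro hv j hj
      exact hv ⟨j, Nat.lt_succ_of_le hj⟩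
    · intro hω j
      exact hω (j:ℕ) (Nat.lt_succ_iff.mp j.2)
  by_cases hω : ω ∈ Gs B c N h k
  · rw [Set.indicator_of_mem (hmem.2 hω), Set.indicator_of_mem hω]
    simp [Xf, Fin.val_last]
  · rw [Set.indicator_of_notMem (fun hv => hω (hmem.1 hv)), Set.indicator_of_notMem hω]

lemma mart_g_integrable (hc : 0 ≤ c) (hh : 0 < h) :
    Integrable (fun x => Real.exp (2*c*x - 2*c^2*h) - 1) (gaussianReal 0 h.toNNReal) := by
  refine Integrable.sub ?_ (integrable_const 1)
  have := (exp_integrable (2*c) (hNNe hh)).const_mul (Real.exp (-(2*c^2*h)))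
  refine this.congr' ?_ ?_
  · exact (by fun_prop : Measurable fun x => Real.exp (2*c*x - 2*c^2*h)).aestronglyMeasurable
  · refine ae_of_all _ fun x => ?_
    rw [← Real.exp_add]
    congr 1
    ring

lemma mart_g_integral (hc : 0 ≤ c) (hh : 0 < h) :
    ∫ x, (Real.exp (2*c*x - 2*c^2*h) - 1) ∂(gaussianReal 0 h.toNNReal) = 0 := by
  have h1 : Integrable (fun x => Real.exp (2*c*x - 2*c^2*h)) (gaussianReal 0 h.toNNReal) := by
    have := (exp_integrable (2*c) (hNNe hh)).const_mul (Real.exp (-(2*c^2*h)))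
    refine this.congr' ?_ ?_
    · exact (by fun_prop : Measurable fun x => Real.exp (2*c*x - 2*c^2*h)).aestronglyMeasurable
    · refine ae_of_all _ fun x => ?_
      rw [← Real.exp_add]
      congr 1
      ring
  rw [integral_sub h1 (integrable_const 1), integral_const]
  simp only [probReal_univ, one_smul]
  have h2 : ∀ x : ℝ, Real.exp (2*c*x - 2*c^2*h)
      = Real.exp (-(2*c^2*h)) * Real.exp ((2*c)*x) := by
    intro x
    rw [← Real.exp_add]
    congr 1
    ring
  simp only [h2]
  rw [integral_const_mul, integral_exp (2*c) (hNNe hh), ← Real.exp_add, coe_toNNReal_h hh]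
  rw [show -(2*c^2*h) + (2*c)^2*h/2 = 0 by ring, Real.exp_zero]
  ring

lemma mart_step [IsProbabilityMeasure μ] (hB : IsStandardBM μ B) (hc : 0 ≤ c) (hh : 0 < h)
    (k : ℕ) :
    ∫ ω, Set.indicator (Gs B c N h k)
      (fun ω' => Xf B c h (k+1) ω' - Xf B c h k ω') ω ∂μ = 0 := by
  have hpt : ∀ ω, Set.indicator (Gs B c N h k)
      (fun ω' => Xf B c h (k+1) ω' - Xf B c h k ω') ω
      = Ffun c N h k (fun j : Fin (k+1) => B (((j:ℕ):ℝ)*h) ω)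
        * (Real.exp (2*c*(Df B h k ω) - 2*c^2*h) - 1) := by
    intro ω
    rw [Ffun_eq hB.2.1 k ω]
    by_cases hω : ω ∈ Gs B c N h k
    · rw [Set.indicator_of_mem hω, Set.indicator_of_mem hω, Xf_succ k ω]
      ring
    · rw [Set.indicator_of_notMem hω, Set.indicator_of_notMem hω, zero_mul]
  rw [integral_congr_ae (ae_of_all _ hpt)]
  rw [key_product hB hh k (Ffun c N h k) (meas_Ffun c N h k) (Real.exp (2*c*N))
    (fun v => Ffun_bound hc trivial v) _ (by fun_prop) (mart_g_integrable hc hh)]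
  rw [mart_g_integral hc hh, mul_zero]

lemma integrable_SV [IsProbabilityMeasure μ] (hB : IsStandardBM μ B) (hh : 0 < h) (n : ℕ) :
    Integrable (SV B c N h n) μ := by
  induction n with
  | zero => exact integrable_const 1
  | succ n ih =>
      refine ih.add ?_
      have hsub : Integrable (fun ω' => Xf B c h (n+1) ω' - Xf B c h n ω') μ :=
        (integrable_Xf hB hh (n+1)).sub (integrable_Xf hB hh n)
      exact hsub.indicator (meas_Gs hB.2.2.1 n)

lemma integral_SV [IsProbabilityMeasure μ] (hB : IsStandardBM μ B) (hc : 0 ≤ c) (hh : 0 < h)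
    (n : ℕ) : ∫ ω, SV B c N h n ω ∂μ = 1 := by
  induction n with
  | zero => simp [SV]
  | succ n ih =>
      have heq : ∫ ω, SV B c N h (n+1) ω ∂μ = ∫ ω, (SV B c N h n ω
          + Set.indicator (Gs B c N h n)
            (fun ω' => Xf B c h (n+1) ω' - Xf B c h n ω') ω) ∂μ := rfl
      have hsub : Integrable (fun ω' => Xf B c h (n+1) ω' - Xf B c h n ω') μ :=
        (integrable_Xf hB hh (n+1)).sub (integrable_Xf hB hh n)
      rw [heq, integral_add (integrable_SV hB hh n)
        (hsub.indicator (meas_Gs hB.2.2.1 n)), ih, mart_step hB hc hh n, add_zero]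

lemma SV_eq_on_Gs (hB0 : ∀ ω, B 0 ω = 0) {n : ℕ} {ω : Ω} (hω : ω ∈ Gs B c N h n) :
    SV B c N h n ω = Xf B c h n ω := by
  induction n with
  | zero => simp [SV, Xf_zero hB0]
  | succ n ih =>
      have hωn : ω ∈ Gs B c N h n := Gs_antitone (Nat.le_succ n) hω
      show SV B c N h n ω + _ = _
      rw [ih hωn, Set.indicator_of_mem hωn]
      ring

lemma SV_eq_cross (hB0 : ∀ ω, B 0 ω = 0) {ω : Ω} :
    ∀ n k, k < n → ω ∈ Gs B c N h k → ω ∉ Gs B c N h (k+1) →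
      SV B c N h n ω = Xf B c h (k+1) ω := by
  intro n
  induction n with
  | zero => intro k hk; omega
  | succ n ih =>
      intro k hk hmem hnot
      rcases Nat.lt_succ_iff_lt_or_eq.mp hk with hlt | rfl
      · have hnotn : ω ∉ Gs B c N h n := fun hn => hnot (Gs_antitone hlt hn)
        show SV B c N h n ω + _ = _
        rw [Set.indicator_of_notMem hnotn, ih k hlt hmem hnot, add_zero]
      · show SV B c N h k ω + _ = _
        rw [Set.indicator_of_mem hmem, SV_eq_on_Gs hB0 hmem]
        ring

lemma first_cross (hB0 : ∀ ω, B 0 ω = 0) (hN : 0 ≤ N) {ω : Ω} :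
    ∀ n, ω ∉ Gs B c N h n → ∃ k, k < n ∧ ω ∈ Gs B c N h k ∧ ω ∉ Gs B c N h (k+1) := by
  intro n
  induction n with
  | zero => intro hn; exact absurd (by rw [Gs_zero hB0 hN]; trivial) hn
  | succ n ih =>
      intro hn
      by_cases hmem : ω ∈ Gs B c N h n
      · exact ⟨n, Nat.lt_succ_self n, hmem, hn⟩
      · obtain ⟨k, hk, h1, h2⟩ := ih hmem
        exact ⟨k, hk.trans (Nat.lt_succ_self n), h1, h2⟩

lemma cross_exceed {k : ℕ} {ω : Ω} (hmem : ω ∈ Gs B c N h k) (hnot : ω ∉ Gs B c N h (k+1)) :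
    N + c*((((k+1:ℕ)):ℝ)*h) < B ((((k+1:ℕ)):ℝ)*h) ω := by
  simp only [Gs, Set.mem_setOf_eq, not_forall] at hnot
  obtain ⟨j, hj, hjval⟩ := hnot
  push_neg at hjval
  rcases Nat.lt_succ_iff_lt_or_eq.mp (Nat.lt_succ_of_le hj) with hlt | rfl
  · exact absurd (hmem j (by omega)) (not_le.2 hjval)
  · exact hjval

lemma grid_upper [IsProbabilityMeasure μ] (hB : IsStandardBM μ B) (hc : 0 < c) (hN : 0 ≤ N)
    (hh : 0 < h) (n : ℕ) :
    μ ((Gs B c N h n)ᶜ) ≤ ENNReal.ofReal (Real.exp (-(2*c*N))) := by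
  have hpt : ∀ ω, Set.indicator (Gs B c N h n)ᶜ (fun _ => Real.exp (2*c*N)) ω
      ≤ SV B c N h n ω := by
    intro ω
    by_cases hω : ω ∈ Gs B c N h n
    · rw [Set.indicator_of_notMem (by simpa using hω)]
      rw [SV_eq_on_Gs hB.2.1 hω]
      exact (Xf_pos n ω).le
    · rw [Set.indicator_of_mem (by simpa using hω)]
      obtain ⟨k, hk, h1, h2⟩ := first_cross hB.2.1 hN n hω
      rw [SV_eq_cross hB.2.1 n k hk h1 h2]
      unfold Xf
      refine Real.exp_le_exp.2 ?_
      have := cross_exceed h1 h2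
      push_cast at this ⊢
      nlinarith
  have hint : ∫ ω, Set.indicator (Gs B c N h n)ᶜ (fun _ => Real.exp (2*c*N)) ω ∂μ
      ≤ ∫ ω, SV B c N h n ω ∂μ :=
    integral_mono ((integrable_const _).indicator (meas_Gs hB.2.2.1 n).compl)
      (integrable_SV hB hh n) hpt
  rw [integral_SV hB hc.le hh n, integral_indicator_const _ (meas_Gs hB.2.2.1 n).compl] at hint
  have h1 : (μ (Gs B c N h n)ᶜ).toReal ≤ Real.exp (-(2*c*N)) := by
    rw [Real.exp_neg, inv_eq_one_div, le_div_iff₀ (Real.exp_pos _)]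
    rw [smul_eq_mul] at hint
    exact hint
  calc μ (Gs B c N h n)ᶜ = ENNReal.ofReal ((μ (Gs B c N h n)ᶜ).toReal) :=
        (ENNReal.ofReal_toReal (measure_ne_top _ _)).symm
    _ ≤ ENNReal.ofReal (Real.exp (-(2*c*N))) := ENNReal.ofReal_le_ofReal h1

end BMaux
end M4

section M5
open MeasureTheory ProbabilityTheory Filter Set
open scoped NNReal ENNReal

namespace BMaux

variable {Ω : Type*} [MeasurableSpace Ω] {μ : Measure Ω} {B : ℝ → Ω → ℝ} {c N h : ℝ}

lemma decomp [IsProbabilityMeasure μ] (hm : ∀ t, Measurable (B t)) (hB0 : ∀ ω, B 0 ω = 0)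
    (hN : 0 ≤ N) {f : Ω → ℝ} (hf : Integrable f μ) (n : ℕ) :
    ∫ ω, f ω ∂μ = (∫ ω in Gs B c N h n, f ω ∂μ)
      + ∑ k ∈ Finset.range n, ∫ ω in (Gs B c N h k \ Gs B c N h (k+1)), f ω ∂μ := by
  induction n with
  | zero =>
      rw [Gs_zero hB0 hN]
      simp
  | succ n ih =>
      rw [ih, Finset.sum_range_succ]
      have hsplit : ∫ ω in Gs B c N h n, f ω ∂μ
          = (∫ ω in Gs B c N h (n+1), f ω ∂μ)
            + ∫ ω in (Gs B c N h n \ Gs B c N h (n+1)), f ω ∂μ := by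
        have hsub : Gs B c N h (n+1) ⊆ Gs B c N h n := Gs_antitone (Nat.le_succ n)
        rw [← setIntegral_union (Set.disjoint_sdiff_right)
          ((meas_Gs hm n).diff (meas_Gs hm (n+1))) hf.integrableOn hf.integrableOn,
          Set.union_diff_cancel hsub]
      rw [hsplit]
      ring

lemma term1 [IsProbabilityMeasure μ] (hB : IsStandardBM μ B) (hc : 0 < c) (hN : 0 ≤ N)
    (hh : 0 < h) {n : ℕ} (hn : 1 ≤ n) (hT : N ≤ c*((n:ℝ)*h)) :
    ∫ ω in Gs B c N h n, SV B c N h n ω ∂μ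
      ≤ Real.exp (-(c*((n:ℝ)*h) - N)^2/(2*((n:ℝ)*h))) := by
  set T : ℝ := (n:ℝ)*h with hTdef
  have hTpos : 0 < T := by
    have : (1:ℝ) ≤ (n:ℝ) := by exact_mod_cast hn
    unfold T
    nlinarith
  have hv : T.toNNReal ≠ 0 := by simp [Real.toNNReal_pos.2 hTpos, ne_of_gt]
  have hcoe : (T.toNNReal : ℝ) = T := Real.coe_toNNReal T hTpos.le
  set K : ℝ := N + c*T with hKdef
  -- replace SV by Xf on Gs n
  have h1 : ∫ ω in Gs B c N h n, SV B c N h n ω ∂μ = ∫ ω in Gs B c N h n, Xf B c h n ω ∂μ :=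
    setIntegral_congr_fun (meas_Gs hB.2.2.1 n) (fun ω hω => SV_eq_on_Gs hB.2.1 hω)
  rw [h1]
  have hXint : Integrable (Xf B c h n) μ := integrable_Xf hB hh n
  have hE : MeasurableSet (B T ⁻¹' (Iic K)) := (hB.2.2.1 T) measurableSet_Iic
  have h2 : ∫ ω in Gs B c N h n, Xf B c h n ω ∂μ ≤ ∫ ω in B T ⁻¹' (Iic K), Xf B c h n ω ∂μ := by
    refine setIntegral_mono_set hXint.integrableOn
      (ae_of_all _ fun ω => (Xf_pos n ω).le) (HasSubset.Subset.eventuallyLE ?_)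
    intro ω hω
    have := hω n le_rfl
    simpa [hKdef] using this
  refine h2.trans ?_
  have h3 : ∫ ω in B T ⁻¹' (Iic K), Xf B c h n ω ∂μ
      = ∫ ω, Set.indicator (Iic K) (fun x => Real.exp (2*c*(x - c*T))) (B T ω) ∂μ := by
    rw [← integral_indicator hE]
    refine integral_congr_ae (ae_of_all _ fun ω => ?_)
    show (B T ⁻¹' Iic K).indicator (Xf B c h n) ω
      = (Iic K).indicator (fun x => Real.exp (2*c*(x - c*T))) (B T ω)
    by_cases hω : B T ω ∈ Iic K
    · rw [Set.indicator_of_mem (show ω ∈ B T ⁻¹' Iic K from hω), Set.indicator_of_mem hω]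
      rfl
    · rw [Set.indicator_of_notMem (show ω ∉ B T ⁻¹' Iic K from hω),
        Set.indicator_of_notMem hω]
  rw [h3]
  have hmeasg : Measurable fun x => Set.indicator (Iic K) (fun x => Real.exp (2*c*(x - c*T))) x :=
    Measurable.indicator (by fun_prop) measurableSet_Iic
  have h4 : ∫ ω, Set.indicator (Iic K) (fun x => Real.exp (2*c*(x - c*T))) (B T ω) ∂μ
      = ∫ x, Set.indicator (Iic K) (fun x => Real.exp (2*c*(x - c*T))) x
          ∂(gaussianReal 0 T.toNNReal) := by
    rw [← law_BT hB hTpos.le]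
    exact (integral_map (hB.2.2.1 T).aemeasurable hmeasg.aestronglyMeasurable).symm
  rw [h4]
  have h5 : ∀ x, Set.indicator (Iic K) (fun x => Real.exp (2*c*(x - c*T))) x
      = Real.exp (-(2*c^2*T)) * Set.indicator (Iic K) (fun x => Real.exp (2*c*x)) x := by
    intro x
    by_cases hx : x ∈ Iic K
    · rw [Set.indicator_of_mem hx, Set.indicator_of_mem hx, ← Real.exp_add]
      congr 1
      ring
    · rw [Set.indicator_of_notMem hx, Set.indicator_of_notMem hx, mul_zero]
  simp only [h5]
  rw [integral_const_mul, integral_exp_indicator (2*c) hv measurableSet_Iic]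
  rw [gauss_Iic_shift, hcoe]
  have h6 : K - 2*c*T = N - c*T := by rw [hKdef]; ring
  rw [h6]
  have h7 : Real.exp (-(2*c^2*T)) * (Real.exp ((2*c)^2*T/2)
      * (gaussianReal 0 T.toNNReal (Iic (N - c*T))).toReal)
      = (gaussianReal 0 T.toNNReal (Iic (N - c*T))).toReal := by
    rw [← mul_assoc, ← Real.exp_add, show -(2*c^2*T) + (2*c)^2*T/2 = 0 by ring, Real.exp_zero,
      one_mul]
  rw [h7]
  have hs : (0:ℝ) ≤ (c*T - N)/T := div_nonneg (by linarith) hTpos.le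
  refine (chernoff_Iic hv hs (N - c*T)).trans ?_
  rw [hcoe]
  refine le_of_eq ?_
  congr 1
  field_simp
  ring

noncomputable def F1fun (c N h : ℝ) (k : ℕ) : (Fin (k+1) → ℝ) → ℝ :=
  Set.indicator {v : Fin (k+1) → ℝ | ∀ j, v j ≤ N + c*(((j:ℕ):ℝ)*h)} (fun _ => (1:ℝ))

lemma meas_F1fun (c N h : ℝ) (k : ℕ) : Measurable (F1fun c N h k) := by
  unfold F1fun
  refine Measurable.indicator measurable_const ?_
  have : {v : Fin (k+1) → ℝ | ∀ j, v j ≤ N + c*(((j:ℕ):ℝ)*h)}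
      = ⋂ j, {v : Fin (k+1) → ℝ | v j ≤ N + c*(((j:ℕ):ℝ)*h)} := by
    ext v; simp
  rw [this]
  exact MeasurableSet.iInter fun j => measurableSet_le (measurable_pi_apply _) measurable_const

lemma F1fun_eq (hB0 : ∀ ω, B 0 ω = 0) (k : ℕ) (ω : Ω) :
    F1fun c N h k (fun j : Fin (k+1) => B (((j:ℕ):ℝ)*h) ω)
      = Set.indicator (Gs B c N h k) (fun _ => (1:ℝ)) ω := by
  unfold F1fun
  have hmem : (fun j : Fin (k+1) => B (((j:ℕ):ℝ)*h) ω)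
      ∈ {v : Fin (k+1) → ℝ | ∀ j, v j ≤ N + c*(((j:ℕ):ℝ)*h)} ↔ ω ∈ Gs B c N h k := by
    constructor
    · intro hv j hj
      exact hv ⟨j, Nat.lt_succ_of_le hj⟩
    · intro hω j
      exact hω (j:ℕ) (Nat.lt_succ_iff.mp j.2)
  by_cases hω : ω ∈ Gs B c N h k
  · rw [Set.indicator_of_mem (hmem.2 hω), Set.indicator_of_mem hω]
  · rw [Set.indicator_of_notMem (fun hv => hω (hmem.1 hv)), Set.indicator_of_notMem hω]

end BMaux
end M5

section M6
open MeasureTheory ProbabilityTheory Filter Set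
open scoped NNReal ENNReal

namespace BMaux

variable {Ω : Type*} [MeasurableSpace Ω] {μ : Measure Ω} {B : ℝ → Ω → ℝ} {c N h : ℝ}

lemma term2 [IsProbabilityMeasure μ] (hB : IsStandardBM μ B) (hc : 0 < c) (hN : 0 ≤ N)
    (hh : 0 < h) {k n : ℕ} (hk : k < n) {a : ℝ} (ha : 2*c*h ≤ a) :
    ∫ ω in (Gs B c N h k \ Gs B c N h (k+1)), SV B c N h n ω ∂μ
      ≤ Real.exp (2*c*(N+a)) * (μ (Gs B c N h k \ Gs B c N h (k+1))).toReal
        + Real.exp (2*c*N + (2*c)^2*h/2 - (a - 2*c*h)^2/(2*h)) := by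
  have ha0 : 0 ≤ a := le_trans (by positivity) ha
  set S : Set Ω := Gs B c N h k \ Gs B c N h (k+1) with hSdef
  have hSmeas : MeasurableSet S := (meas_Gs hB.2.2.1 k).diff (meas_Gs hB.2.2.1 (k+1))
  set gg : ℝ → ℝ := Set.indicator (Ioi a) (fun x => Real.exp (2*c*x)) with hggdef
  have hggmeas : Measurable gg := Measurable.indicator (by fun_prop) measurableSet_Ioi
  have hggnn : ∀ x, 0 ≤ gg x := fun x =>
    Set.indicator_nonneg (fun y _ => Real.exp_nonneg _) x
  have hggint : Integrable gg (gaussianReal 0 h.toNNReal) :=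
    (exp_integrable (2*c) (hNNe hh)).indicator measurableSet_Ioi
  have h1 : ∫ ω in S, SV B c N h n ω ∂μ = ∫ ω in S, Xf B c h (k+1) ω ∂μ :=
    setIntegral_congr_fun hSmeas (fun ω hω => SV_eq_cross hB.2.1 n k hk hω.1 hω.2)
  rw [h1]
  have hXint : Integrable (Xf B c h (k+1)) μ := integrable_Xf hB hh (k+1)
  have hGint : Integrable (fun ω => gg (Df B h k ω)) μ :=
    integrable_comp_Df hB hh k hggmeas hggint
  have h2 : ∀ ω ∈ S, Xf B c h (k+1) ω
      ≤ Real.exp (2*c*(N+a)) + Real.exp (2*c*N) * gg (Df B h k ω) := by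
    intro ω hω
    have hXk : Xf B c h k ω ≤ Real.exp (2*c*N) := Xf_le_on_Gs hc.le k hω.1
    have hXsucc := Xf_succ (B := B) (c := c) (h := h) k ω
    by_cases hD : Df B h k ω ≤ a
    · have hup : Xf B c h (k+1) ω ≤ Real.exp (2*c*N) * Real.exp (2*c*a) := by
        rw [hXsucc]
        exact mul_le_mul hXk (Real.exp_le_exp.2 (by nlinarith)) (Real.exp_nonneg _)
          (Real.exp_nonneg _)
      rw [← Real.exp_add, show 2*c*N + 2*c*a = 2*c*(N+a) by ring] at hup
      have hnn := mul_nonneg (Real.exp_nonneg (2*c*N)) (hggnn (Df B h k ω))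
      linarith
    · push_neg at hD
      have hgval : gg (Df B h k ω) = Real.exp (2*c*(Df B h k ω)) :=
        Set.indicator_of_mem hD _
      have hup : Xf B c h (k+1) ω ≤ Real.exp (2*c*N) * Real.exp (2*c*(Df B h k ω)) := by
        rw [hXsucc]
        exact mul_le_mul hXk (Real.exp_le_exp.2 (by nlinarith)) (Real.exp_nonneg _)
          (Real.exp_nonneg _)
      rw [← hgval] at hup
      have := Real.exp_nonneg (2*c*(N+a))
      linarith
  -- the Gaussian tail factor
  have hv := hNNe hh
  have hcoe := coe_toNNReal_h hh
  have hgauss : ∫ x, gg x ∂(gaussianReal 0 h.toNNReal)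
      ≤ Real.exp ((2*c)^2*h/2 - (a - 2*c*h)^2/(2*h)) := by
    rw [hggdef]
    rw [integral_exp_indicator (2*c) hv measurableSet_Ioi, gauss_Ioi_shift, hcoe]
    have hs : (0:ℝ) ≤ (a - 2*c*h)/h := div_nonneg (by linarith) hh.le
    have := chernoff_Ioi hv hs (a - 2*c*h)
    rw [hcoe] at this
    calc Real.exp ((2*c)^2*h/2) * (gaussianReal 0 h.toNNReal (Ioi (a - 2*c*h))).toReal
        ≤ Real.exp ((2*c)^2*h/2) * Real.exp (-((a-2*c*h)/h*(a - 2*c*h)) + ((a-2*c*h)/h)^2*h/2) :=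
          mul_le_mul_of_nonneg_left this (Real.exp_nonneg _)
      _ = Real.exp ((2*c)^2*h/2 - (a - 2*c*h)^2/(2*h)) := by
          rw [← Real.exp_add]
          congr 1
          field_simp
          ring
  -- independence step
  have hkey : ∫ ω in Gs B c N h k, gg (Df B h k ω) ∂μ
      = (∫ ω, Set.indicator (Gs B c N h k) (fun _ => (1:ℝ)) ω ∂μ)
        * ∫ x, gg x ∂(gaussianReal 0 h.toNNReal) := by
    rw [← integral_indicator (meas_Gs hB.2.2.1 k)]
    have hpt : ∀ ω, Set.indicator (Gs B c N h k) (fun ω' => gg (Df B h k ω')) ω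
        = F1fun c N h k (fun j : Fin (k+1) => B (((j:ℕ):ℝ)*h) ω) * gg (Df B h k ω) := by
      intro ω
      rw [F1fun_eq hB.2.1 k ω]
      by_cases hω : ω ∈ Gs B c N h k
      · rw [Set.indicator_of_mem hω, Set.indicator_of_mem hω, one_mul]
      · rw [Set.indicator_of_notMem hω, Set.indicator_of_notMem hω, zero_mul]
    rw [integral_congr_ae (ae_of_all _ hpt)]
    rw [key_product hB hh k (F1fun c N h k) (meas_F1fun c N h k) 1 ?_ gg hggmeas hggint]
    · congr 1
      refine integral_congr_ae (ae_of_all _ fun ω => ?_)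
      exact F1fun_eq hB.2.1 k ω
    · intro v
      unfold F1fun
      by_cases hv' : v ∈ {v : Fin (k+1) → ℝ | ∀ j, v j ≤ N + c*(((j:ℕ):ℝ)*h)} <;>
        simp [hv']
  have hind01 : 0 ≤ ∫ ω, Set.indicator (Gs B c N h k) (fun _ => (1:ℝ)) ω ∂μ ∧
      ∫ ω, Set.indicator (Gs B c N h k) (fun _ => (1:ℝ)) ω ∂μ ≤ 1 := by
    rw [integral_indicator_const _ (meas_Gs hB.2.2.1 k), smul_eq_mul, mul_one]
    exact ⟨ENNReal.toReal_nonneg, by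
      have := prob_le_one (μ := μ) (s := Gs B c N h k)
      exact ENNReal.toReal_le_of_le_ofReal one_pos.le (by simpa using this)⟩
  have hggint_nn : 0 ≤ ∫ x, gg x ∂(gaussianReal 0 h.toNNReal) :=
    integral_nonneg hggnn
  calc ∫ ω in S, Xf B c h (k+1) ω ∂μ
      ≤ ∫ ω in S, (Real.exp (2*c*(N+a)) + Real.exp (2*c*N) * gg (Df B h k ω)) ∂μ :=
        setIntegral_mono_on hXint.integrableOn
          ((integrable_const _).add (hGint.const_mul _)).integrableOn hSmeas h2
    _ = Real.exp (2*c*(N+a)) * (μ S).toReal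
        + Real.exp (2*c*N) * ∫ ω in S, gg (Df B h k ω) ∂μ := by
        rw [integral_add (integrable_const _).integrableOn (hGint.const_mul _).integrableOn,
          setIntegral_const, measureReal_def, integral_const_mul, smul_eq_mul]
        ring
    _ ≤ Real.exp (2*c*(N+a)) * (μ S).toReal
        + Real.exp (2*c*N) * ∫ ω in Gs B c N h k, gg (Df B h k ω) ∂μ := by
        have hmono : ∫ ω in S, gg (Df B h k ω) ∂μ
            ≤ ∫ ω in Gs B c N h k, gg (Df B h k ω) ∂μ :=
          setIntegral_mono_set hGint.integrableOn
            (ae_of_all _ fun ω => hggnn _)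
            (HasSubset.Subset.eventuallyLE Set.diff_subset)
        have := mul_le_mul_of_nonneg_left hmono (Real.exp_nonneg (2*c*N))
        linarith
    _ ≤ Real.exp (2*c*(N+a)) * (μ S).toReal
        + Real.exp (2*c*N) * Real.exp ((2*c)^2*h/2 - (a - 2*c*h)^2/(2*h)) := by
        rw [hkey]
        have hb : (∫ ω, Set.indicator (Gs B c N h k) (fun _ => (1:ℝ)) ω ∂μ)
            * ∫ x, gg x ∂(gaussianReal 0 h.toNNReal)
            ≤ Real.exp ((2*c)^2*h/2 - (a - 2*c*h)^2/(2*h)) := by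
          calc (∫ ω, Set.indicator (Gs B c N h k) (fun _ => (1:ℝ)) ω ∂μ)
              * ∫ x, gg x ∂(gaussianReal 0 h.toNNReal)
              ≤ 1 * ∫ x, gg x ∂(gaussianReal 0 h.toNNReal) :=
                mul_le_mul_of_nonneg_right hind01.2 hggint_nn
            _ = ∫ x, gg x ∂(gaussianReal 0 h.toNNReal) := one_mul _
            _ ≤ _ := hgauss
        have := mul_le_mul_of_nonneg_left hb (Real.exp_nonneg (2*c*N))
        linarith
    _ = Real.exp (2*c*(N+a)) * (μ S).toReal
        + Real.exp (2*c*N + (2*c)^2*h/2 - (a - 2*c*h)^2/(2*h)) := by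
        rw [← Real.exp_add]
        ring_nf

lemma sum_Sk [IsProbabilityMeasure μ] (hB : IsStandardBM μ B) (hc : 0 < c) (hh : 0 < h)
    (n : ℕ) :
    ∑ k ∈ Finset.range n, (μ (Gs B c N h k \ Gs B c N h (k+1))).toReal
      ≤ (μ {ω | ∃ t : ℝ, 0 ≤ t ∧ B t ω - c * t > N}).toReal := by
  set A : Set Ω := {ω | ∃ t : ℝ, 0 ≤ t ∧ B t ω - c * t > N} with hAdef
  have hdisj : Set.PairwiseDisjoint ↑(Finset.range n)
      (fun k => Gs B c N h k \ Gs B c N h (k+1)) := by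
    intro i hi j hj hij
    rcases Nat.lt_or_ge i j with hlt | hge
    · refine Set.disjoint_left.2 fun ω hωi hωj => ?_
      exact hωi.2 (Gs_antitone (by omega : (i+1) ≤ j) hωj.1)
    · have hlt : j < i := lt_of_le_of_ne hge (Ne.symm hij)
      refine Set.disjoint_left.2 fun ω hωi hωj => ?_
      exact hωj.2 (Gs_antitone (by omega : (j+1) ≤ i) hωi.1)
  have hsub : ∀ k, Gs B c N h k \ Gs B c N h (k+1) ⊆ A := by
    intro k ω hω
    have := cross_exceed hω.1 hω.2
    refine ⟨(((k+1:ℕ)):ℝ)*h, by positivity, by linarith⟩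
  have h1 : ∑ k ∈ Finset.range n, μ (Gs B c N h k \ Gs B c N h (k+1))
      = μ (⋃ k ∈ Finset.range n, (Gs B c N h k \ Gs B c N h (k+1))) :=
    (measure_biUnion_finset hdisj fun k _ =>
      (meas_Gs hB.2.2.1 k).diff (meas_Gs hB.2.2.1 (k+1))).symm
  have h2 : μ (⋃ k ∈ Finset.range n, (Gs B c N h k \ Gs B c N h (k+1))) ≤ μ A :=
    measure_mono (Set.iUnion₂_subset fun k _ => hsub k)
  calc ∑ k ∈ Finset.range n, (μ (Gs B c N h k \ Gs B c N h (k+1))).toReal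
      = (∑ k ∈ Finset.range n, μ (Gs B c N h k \ Gs B c N h (k+1))).toReal :=
        (ENNReal.toReal_sum fun k _ => measure_ne_top _ _).symm
    _ ≤ (μ A).toReal := by
        rw [h1]
        exact ENNReal.toReal_mono (measure_ne_top _ _) h2

lemma master [IsProbabilityMeasure μ] (hB : IsStandardBM μ B) (hc : 0 < c) (hN : 0 ≤ N)
    (hh : 0 < h) {n : ℕ} (hn : 1 ≤ n) {a : ℝ} (ha : 2*c*h ≤ a)
    (hT : N ≤ c*((n:ℝ)*h)) :
    1 ≤ Real.exp (-(c*((n:ℝ)*h) - N)^2/(2*((n:ℝ)*h)))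
      + Real.exp (2*c*(N+a)) * (μ {ω | ∃ t : ℝ, 0 ≤ t ∧ B t ω - c * t > N}).toReal
      + (n:ℝ) * Real.exp (2*c*N + (2*c)^2*h/2 - (a - 2*c*h)^2/(2*h)) := by
  have h0 : (1:ℝ) = ∫ ω, SV B c N h n ω ∂μ := (integral_SV hB hc.le hh n).symm
  rw [h0, decomp hB.2.2.1 hB.2.1 hN (integrable_SV hB hh n) n]
  have hterm2 : ∑ k ∈ Finset.range n, ∫ ω in (Gs B c N h k \ Gs B c N h (k+1)),
      SV B c N h n ω ∂μ
      ≤ Real.exp (2*c*(N+a)) * (μ {ω | ∃ t : ℝ, 0 ≤ t ∧ B t ω - c * t > N}).toReal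
        + (n:ℝ) * Real.exp (2*c*N + (2*c)^2*h/2 - (a - 2*c*h)^2/(2*h)) := by
    calc ∑ k ∈ Finset.range n, ∫ ω in (Gs B c N h k \ Gs B c N h (k+1)), SV B c N h n ω ∂μ
        ≤ ∑ k ∈ Finset.range n, (Real.exp (2*c*(N+a))
            * (μ (Gs B c N h k \ Gs B c N h (k+1))).toReal
            + Real.exp (2*c*N + (2*c)^2*h/2 - (a - 2*c*h)^2/(2*h))) :=
          Finset.sum_le_sum fun k hk => term2 hB hc hN hh (Finset.mem_range.mp hk) ha
      _ = Real.exp (2*c*(N+a))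
            * (∑ k ∈ Finset.range n, (μ (Gs B c N h k \ Gs B c N h (k+1))).toReal)
            + (n:ℝ) * Real.exp (2*c*N + (2*c)^2*h/2 - (a - 2*c*h)^2/(2*h)) := by
          rw [Finset.sum_add_distrib, Finset.sum_const, Finset.card_range, ← Finset.mul_sum]
          ring
      _ ≤ _ := by
          have := sum_Sk (N := N) hB hc hh n
          have h3 := mul_le_mul_of_nonneg_left this (Real.exp_nonneg (2*c*(N+a)))
          linarith
  have hterm1 := term1 hB hc hN hh hn hT
  linarith

end BMaux
end M6

section M7
open MeasureTheory ProbabilityTheory Filter Set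
open scoped NNReal ENNReal

namespace BMaux

variable {Ω : Type*} [MeasurableSpace Ω] {μ : Measure Ω} {B : ℝ → Ω → ℝ} {c N : ℝ}

lemma mem_compl_Gs_iff {h : ℝ} {n : ℕ} {ω : Ω} :
    ω ∈ (Gs B c N h n)ᶜ ↔ ∃ j ≤ n, N + c*((j:ℝ)*h) < B ((j:ℝ)*h) ω := by
  simp only [Gs, Set.mem_compl_iff, Set.mem_setOf_eq, not_forall, not_le, exists_prop]

lemma upper_final [IsProbabilityMeasure μ] (hB : IsStandardBM μ B) (hc : 0 < c)
    (hN : 0 ≤ N) :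
    μ {ω | ∃ t : ℝ, 0 ≤ t ∧ B t ω - c * t > N} ≤ ENNReal.ofReal (Real.exp (-(2*c*N))) := by
  set D : ℕ → Set Ω := fun m => (Gs B c N (((2:ℝ)^m)⁻¹) (m * 2^m))ᶜ with hD
  have hhm : ∀ m : ℕ, (0:ℝ) < ((2:ℝ)^m)⁻¹ := fun m => by positivity
  have hmono : Monotone D := by
    refine monotone_nat_of_le_succ fun m => ?_
    intro ω hω
    rw [hD, Set.mem_compl_iff] at hω ⊢
    rw [← Set.mem_compl_iff, mem_compl_Gs_iff] at hω ⊢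
    obtain ⟨j, hj, hval⟩ := hω
    refine ⟨2*j, ?_, ?_⟩
    · calc 2*j ≤ 2*(m*2^m) := by omega
        _ = m*2^(m+1) := by ring
        _ ≤ (m+1)*2^(m+1) := Nat.mul_le_mul_right _ (by omega)
    · have heq : ((2*j:ℕ):ℝ)*(((2:ℝ)^(m+1))⁻¹) = (j:ℝ)*(((2:ℝ)^m)⁻¹) := by
        push_cast
        rw [pow_succ]
        field_simp
      rw [heq]
      exact hval
  have hsub : {ω | ∃ t : ℝ, 0 ≤ t ∧ B t ω - c * t > N} ⊆ ⋃ m, D m := by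
    rintro ω ⟨t, ht0, htgt⟩
    set f : ℝ → ℝ := fun u => B u ω - c*u with hf
    have hfc : Continuous f := (hB.1 ω).sub (continuous_const.mul continuous_id)
    have hU : IsOpen {u | N < f u} := isOpen_lt continuous_const hfc
    have htU : t ∈ {u | N < f u} := htgt
    obtain ⟨δ, hδ, hball⟩ := Metric.isOpen_iff.mp hU t htU
    obtain ⟨m, hm⟩ := exists_nat_gt (max δ⁻¹ (t+1))
    have h2m : (m:ℝ) < 2^m := by exact_mod_cast Nat.lt_two_pow_self
    have h2mpos : (0:ℝ) < 2^m := by positivity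
    have hδ2m : δ⁻¹ < 2^m := lt_trans (lt_of_le_of_lt (le_max_left _ _) hm) h2m
    have hinv : ((2:ℝ)^m)⁻¹ < δ := by
      have h1 : δ⁻¹ * δ = 1 := inv_mul_cancel₀ hδ.ne'
      have h2 : ((2:ℝ)^m)⁻¹ * 2^m = 1 := inv_mul_cancel₀ h2mpos.ne'
      nlinarith [inv_pos.2 h2mpos, inv_pos.2 hδ]
    have htm : t + 1 < (m:ℝ) := lt_of_le_of_lt (le_max_right _ _) hm
    set j : ℕ := ⌈t * 2^m⌉₊ with hj
    set u : ℝ := (j:ℝ) * ((2:ℝ)^m)⁻¹ with hu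
    have hceil1 : t * 2^m ≤ (j:ℝ) := Nat.le_ceil _
    have hceil2 : (j:ℝ) < t * 2^m + 1 := Nat.ceil_lt_add_one (by positivity)
    have hu1 : t ≤ u := by
      rw [hu, ← mul_le_mul_iff_left₀ h2mpos]
      calc t * 2^m ≤ (j:ℝ) := hceil1
        _ = (j:ℝ) * ((2:ℝ)^m)⁻¹ * 2^m := by field_simp
    have hu2 : u < t + δ := by
      rw [hu]
      have : (j:ℝ) * ((2:ℝ)^m)⁻¹ < (t * 2^m + 1) * ((2:ℝ)^m)⁻¹ :=
        mul_lt_mul_of_pos_right hceil2 (hhm m)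
      have heq : (t * 2^m + 1) * ((2:ℝ)^m)⁻¹ = t + ((2:ℝ)^m)⁻¹ := by field_simp
      rw [heq] at this
      linarith
    have humem : u ∈ {u | N < f u} := by
      refine hball ?_
      rw [Metric.mem_ball, Real.dist_eq, abs_of_nonneg (by linarith)]
      linarith
    refine Set.mem_iUnion.2 ⟨m, ?_⟩
    show ω ∈ (Gs B c N (((2:ℝ)^m)⁻¹) (m * 2^m))ᶜ
    rw [mem_compl_Gs_iff]
    refine ⟨j, ?_, ?_⟩
    · rw [hj, Nat.ceil_le]
      push_cast
      exact mul_le_mul_of_nonneg_right (by linarith) h2mpos.le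
    · have : N < B u ω - c*u := humem
      rw [← hu]
      linarith
  have htend := tendsto_measure_iUnion_atTop (μ := μ) hmono
  have hbound : ∀ m, μ (D m) ≤ ENNReal.ofReal (Real.exp (-(2*c*N))) := fun m =>
    grid_upper hB hc hN (hhm m) (m*2^m)
  exact le_trans (measure_mono hsub) (le_of_tendsto' htend hbound)

end BMaux
end M7

section M8
open MeasureTheory ProbabilityTheory Filter Set
open scoped NNReal ENNReal Topology

namespace BMaux

variable {Ω : Type*} [MeasurableSpace Ω] {μ : Measure Ω} {B : ℝ → Ω → ℝ} {c N : ℝ}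

set_option maxHeartbeats 2000000 in
lemma lower_final [IsProbabilityMeasure μ] (hB : IsStandardBM μ B) (hc : 0 < c)
    (hN : 0 ≤ N) :
    Real.exp (-(2*c*N)) ≤ (μ {ω | ∃ t : ℝ, 0 ≤ t ∧ B t ω - c * t > N}).toReal := by
  set R := (μ {ω | ∃ t : ℝ, 0 ≤ t ∧ B t ω - c * t > N}).toReal with hR
  have hR0 : 0 ≤ R := ENNReal.toReal_nonneg
  suffices hmain : 1 ≤ Real.exp (2*c*N) * R by
    have epos := Real.exp_pos (2*c*N)
    rw [Real.exp_neg]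
    have h2 := mul_le_mul_of_nonneg_left hmain (inv_pos.2 epos).le
    rw [mul_one, ← mul_assoc, inv_mul_cancel₀ epos.ne', one_mul] at h2
    exact h2
  obtain ⟨j₀, hj₀⟩ := exists_nat_ge (max (max 48 (4*c)) (2*N/c))
  have hev : ∀ᶠ j : ℕ in atTop, 1 ≤ Real.exp (-(c^2/8) * ((j:ℝ)+1))
      + Real.exp (2*c*(N + ((j:ℝ)+1)⁻¹)) * R
      + Real.exp (2*c*N + 2*c^2 - ((j:ℝ)+1)) := by
    filter_upwards [eventually_ge_atTop j₀] with j hj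
    obtain ⟨m, hmdef⟩ : ∃ m : ℝ, m = (j:ℝ)+1 := ⟨_, rfl⟩
    have hjj : (j₀:ℝ) ≤ (j:ℝ) := Nat.cast_le.2 hj
    have hbig : max (max 48 (4*c)) (2*N/c) ≤ m := by
      rw [hmdef]; linarith
    have hm48 : (48:ℝ) ≤ m := le_trans (le_trans (le_max_left _ _) (le_max_left _ _)) hbig
    have hm4c : 4*c ≤ m := le_trans (le_trans (le_max_right _ _) (le_max_left _ _)) hbig
    have hmN : 2*N/c ≤ m := le_trans (le_max_right _ _) hbig
    have hm1 : (1:ℝ) ≤ m := by linarith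
    have hmpos : (0:ℝ) < m := by linarith
    have hcm : 2*N ≤ c*m := by
      have h1 := (div_le_iff₀ hc).mp hmN
      nlinarith
    have hh4 : (0:ℝ) < (m^4)⁻¹ := by positivity
    have hm3 : m ≤ m^3 := by
      nlinarith [mul_nonneg (mul_nonneg hmpos.le (by linarith : (0:ℝ) ≤ m - 1))
        (by linarith : (0:ℝ) ≤ m + 1)]
    have h2c3 : 2*c ≤ m^3 := by linarith
    have h4c3 : 4*c ≤ m^3 := by linarith
    have ha : 2*c*((m^4)⁻¹) ≤ m⁻¹ := by
      rw [← div_eq_mul_inv, inv_eq_one_div, div_le_div_iff₀ (by positivity) hmpos]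
      nlinarith [mul_le_mul_of_nonneg_right h2c3 hmpos.le]
    set n : ℕ := (j+1)^5 with hn
    have hn1 : 1 ≤ n := Nat.one_le_iff_ne_zero.2 (by positivity)
    have hcast : ((n:ℕ):ℝ) = m^5 := by rw [hn, hmdef]; push_cast; ring
    have hTm : (n:ℝ)*((m^4)⁻¹) = m := by rw [hcast]; field_simp
    have hT : N ≤ c*((n:ℝ)*((m^4)⁻¹)) := by rw [hTm]; nlinarith
    have hM := master hB hc hN hh4 hn1 ha hT
    rw [hTm] at hM
    rw [← hmdef]
    refine le_trans hM (add_le_add (add_le_add ?_ le_rfl) ?_)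
    · refine Real.exp_le_exp.2 ?_
      have h1 : c*m/2 ≤ c*m - N := by linarith
      have h2 : (c*m/2)^2 ≤ (c*m - N)^2 := by nlinarith [mul_pos hc hmpos]
      have h3 : (c*m/2)^2/(2*m) = c^2/8*m := by field_simp; ring
      have h4 : (c*m/2)^2/(2*m) ≤ (c*m - N)^2/(2*m) := by gcongr
      rw [neg_div]
      have h5 : (c*m - N)^2/(2*m) = (c*m - N)^2/(2*m) := rfl
      nlinarith
    · rw [hcast]
      have hexp : m ≤ Real.exp m := by linarith [Real.add_one_le_exp m]
      have h5 : m^5 ≤ Real.exp (5*m) := by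
        calc m^5 ≤ (Real.exp m)^5 := pow_le_pow_left₀ hmpos.le hexp 5
          _ = Real.exp (5*m) := by
              rw [← Real.exp_nat_mul]
              norm_num
      have hQ : 2*c*N + (2*c)^2*((m^4)⁻¹)/2 - (m⁻¹ - 2*c*((m^4)⁻¹))^2/(2*((m^4)⁻¹))
          ≤ 2*c*N + 2*c^2 - m^2/8 := by
        have h14 : (1:ℝ) ≤ m^4 := by nlinarith
        have hinv14 : (m^4)⁻¹ ≤ 1 := by
          rw [inv_le_one_iff₀]
          right; exact h14
        have e1 : (2*c)^2*((m^4)⁻¹)/2 ≤ 2*c^2 := by nlinarith [sq_nonneg c]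
        have e2 : m⁻¹/2 ≤ m⁻¹ - 2*c*((m^4)⁻¹) := by
          have h1 : 2*c*((m^4)⁻¹) ≤ m⁻¹/2 := by
            have key : 4*c*m ≤ m^4 := by
              nlinarith [mul_le_mul_of_nonneg_right h4c3 hmpos.le]
            rw [show m⁻¹/2 = 1/(2*m) by rw [inv_eq_one_div]; ring, ← div_eq_mul_inv,
              div_le_div_iff₀ (by positivity) (by positivity)]
            nlinarith
          linarith
        have e2' : (0:ℝ) ≤ m⁻¹/2 := by positivity
        have e3 : (m⁻¹/2)^2 ≤ (m⁻¹ - 2*c*((m^4)⁻¹))^2 := by nlinarith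
        have e4 : (m⁻¹/2)^2/(2*((m^4)⁻¹)) = m^2/8 := by
          field_simp
          ring
        have e5 : (m⁻¹/2)^2/(2*((m^4)⁻¹)) ≤ (m⁻¹ - 2*c*((m^4)⁻¹))^2/(2*((m^4)⁻¹)) := by gcongr
        linarith
      calc m^5 * Real.exp (2*c*N + (2*c)^2*((m^4)⁻¹)/2 - (m⁻¹ - 2*c*((m^4)⁻¹))^2/(2*((m^4)⁻¹)))
          ≤ Real.exp (5*m) * Real.exp (2*c*N + 2*c^2 - m^2/8) :=
            mul_le_mul h5 (Real.exp_le_exp.2 hQ) (Real.exp_nonneg _) (Real.exp_nonneg _)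
        _ = Real.exp (5*m + (2*c*N + 2*c^2 - m^2/8)) := by rw [← Real.exp_add]
        _ ≤ Real.exp (2*c*N + 2*c^2 - m) := Real.exp_le_exp.2 (by nlinarith)
  have hnat : Tendsto (fun j : ℕ => ((j:ℝ)+1)) atTop atTop :=
    tendsto_atTop_add_const_right _ 1 tendsto_natCast_atTop_atTop
  have hlim1 : Tendsto (fun j : ℕ => Real.exp (-(c^2/8) * ((j:ℝ)+1))) atTop (𝓝 0) := by
    refine Real.tendsto_exp_atBot.comp ?_
    have h1 : Tendsto (fun j : ℕ => (c^2/8) * ((j:ℝ)+1)) atTop atTop :=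
      Tendsto.const_mul_atTop (by positivity) hnat
    have h2 := tendsto_neg_atTop_atBot.comp h1
    have h3 : (fun j : ℕ => -(c^2/8) * ((j:ℝ)+1)) = fun j : ℕ => -((c^2/8) * ((j:ℝ)+1)) := by
      funext j; ring
    rw [h3]
    exact h2
  have hlim3 : Tendsto (fun j : ℕ => Real.exp (2*c*N + 2*c^2 - ((j:ℝ)+1))) atTop (𝓝 0) := by
    refine Real.tendsto_exp_atBot.comp ?_
    have h1 := tendsto_neg_atTop_atBot.comp hnat
    have h2 := tendsto_atBot_add_const_left _ (2*c*N + 2*c^2) h1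
    have h3 : (fun j : ℕ => 2*c*N + 2*c^2 - ((j:ℝ)+1))
        = fun j : ℕ => 2*c*N + 2*c^2 + (-((j:ℝ)+1)) := by
      funext j; ring
    rw [h3]
    exact h2
  have hlim2 : Tendsto (fun j : ℕ => Real.exp (2*c*(N + ((j:ℝ)+1)⁻¹)) * R) atTop
      (𝓝 (Real.exp (2*c*N) * R)) := by
    have hinv : Tendsto (fun j : ℕ => ((j:ℝ)+1)⁻¹) atTop (𝓝 0) :=
      tendsto_inv_atTop_zero.comp hnat
    have h1 : Tendsto (fun j : ℕ => 2*c*(N + ((j:ℝ)+1)⁻¹)) atTop (𝓝 (2*c*N)) := by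
      have h0 := (tendsto_const_nhds (x := N) (f := atTop (α := ℕ))).add hinv
      rw [add_zero] at h0
      have h2 := h0.const_mul (2*c)
      exact h2
    exact ((Real.continuous_exp.tendsto (2*c*N)).comp h1).mul_const R
  have hsum := (hlim1.add hlim2).add hlim3
  have hfinal := ge_of_tendsto hsum hev
  rw [zero_add, add_zero] at hfinal
  exact hfinal

end BMaux
end M8

section Final
open MeasureTheory ProbabilityTheory Filter

/-- For a standard Brownian motion `B` and `c > 0`, the random variable
`sup_{t ≥ 0} (B_t - c t)` is exponentially distributed with parameter `2c`:
for every `N ≥ 0`, `P(sup_{t ≥ 0} (B_t - c t) > N) = e^{-2Nc}`. -/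
theorem brownian_drift_sup_exponential
    {Ω : Type*} [MeasurableSpace Ω] (μ : Measure Ω) [IsProbabilityMeasure μ]
    (B : ℝ → Ω → ℝ) (hB : IsStandardBM μ B) (c : ℝ) (hc : 0 < c) (N : ℝ) (hN : 0 ≤ N) :
    μ {ω | ∃ t : ℝ, 0 ≤ t ∧ B t ω - c * t > N} = ENNReal.ofReal (Real.exp (-2 * N * c)) := by
  have hexp : Real.exp (-2*N*c) = Real.exp (-(2*c*N)) := by ring_nf
  rw [hexp]
  refine le_antisymm (BMaux.upper_final hB hc hN) ?_
  have hlow := BMaux.lower_final hB hc hN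
  calc ENNReal.ofReal (Real.exp (-(2*c*N)))
      ≤ ENNReal.ofReal ((μ {ω | ∃ t : ℝ, 0 ≤ t ∧ B t ω - c * t > N}).toReal) :=
        ENNReal.ofReal_le_ofReal hlow
    _ = μ {ω | ∃ t : ℝ, 0 ≤ t ∧ B t ω - c * t > N} :=
        ENNReal.ofReal_toReal (measure_ne_top μ _)

end Final
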